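/- The sequence of ideals ((q;q)_n) in ℤ[q], n ∈ ℕ, is cofinal with the directed family of principal ideals generated by finite products of cyclotomic polynomials Φ_m(q), m ∈ ℕ; consequently the Habiro ring lim← ℤ[q]/((q;q)_n) is isomorphic to the cyclotomic completion ℤ[q]^ℕ = lim←_{f ∈ Φ*_ℕ} ℤ[q]/(f). -/

import Mathlib

set_option maxHeartbeats 1000000
set_option synthInstance.maxHeartbeats 400000

open Polynomial Finset

/-- `(q;q)_n = ∏_{i=1}^n (1 - q^i)` in `ℤ[q]`. -/
noncomputable def poch (n : ℕ) : Polynomial ℤ :=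
  ∏ i ∈ Finset.range n, (1 - X ^ (i + 1))

noncomputable def pochIdeal (n : ℕ) : Ideal (Polynomial ℤ) := Ideal.span {poch n}

theorem pochIdeal_antitone {m n : ℕ} (h : m ≤ n) : pochIdeal n ≤ pochIdeal m :=
  Ideal.span_singleton_le_span_singleton.mpr
    (Finset.prod_dvd_prod_of_subset _ _ _ (Finset.range_subset_range.mpr h))

/-- The Habiro ring `lim← ℤ[q]/((q;q)_n)` as the subring of compatible sequences. -/
noncomputable def HabiroLimit : Subring (Π n : ℕ, Polynomial ℤ ⧸ pochIdeal n) where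
  carrier := {x | ∀ m n (h : m ≤ n),
    Ideal.Quotient.factor (pochIdeal_antitone h) (x n) = x m}
  one_mem' := by intro m n h; simp
  mul_mem' := by intro a b ha hb m n h; simp [Pi.mul_apply, map_mul, ha m n h, hb m n h]
  add_mem' := by intro a b ha hb m n h; simp [Pi.add_apply, map_add, ha m n h, hb m n h]
  zero_mem' := by intro m n h; simp
  neg_mem' := by intro a ha m n h; simp [Pi.neg_apply, map_neg, ha m n h]

/-- `f` belongs to the multiplicative set `Φ*_ℕ` generated by the cyclotomic
polynomials `Φ_m(q)`, `m ∈ ℕ`. -/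
def IsCycProd (f : Polynomial ℤ) : Prop :=
  ∃ m : ℕ →₀ ℕ, f = m.prod fun i e => (cyclotomic i ℤ) ^ e

/-- The cyclotomic completion `ℤ[q]^ℕ = lim←_{f ∈ Φ*_ℕ} ℤ[q]/(f)` as the subring of
compatible families indexed by `Φ*_ℕ` directed by divisibility. -/
noncomputable def CycLimit :
    Subring (Π f : {f : Polynomial ℤ // IsCycProd f}, Polynomial ℤ ⧸ Ideal.span {f.1}) where
  carrier := {x | ∀ (f g : {f : Polynomial ℤ // IsCycProd f}) (h : f.1 ∣ g.1),
    Ideal.Quotient.factor (S := Ideal.span {g.1}) (T := Ideal.span {f.1})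
      (Ideal.span_singleton_le_span_singleton.mpr h) (x g) = x f}
  one_mem' := by intro f g h; simp
  mul_mem' := by intro a b ha hb f g h; simp [Pi.mul_apply, map_mul, ha f g h, hb f g h]
  add_mem' := by intro a b ha hb f g h; simp [Pi.add_apply, map_add, ha f g h, hb f g h]
  zero_mem' := by intro f g h; simp
  neg_mem' := by intro a ha f g h; simp [Pi.neg_apply, map_neg, ha f g h]

lemma isCycProd_one : IsCycProd 1 := ⟨0, by simp⟩

lemma isCycProd_cyclotomic (i : ℕ) : IsCycProd (cyclotomic i ℤ) :=
  ⟨Finsupp.single i 1, by rw [Finsupp.prod_single_index] <;> simp⟩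

lemma isCycProd_mul {f g : Polynomial ℤ} (hf : IsCycProd f) (hg : IsCycProd g) :
    IsCycProd (f * g) := by
  obtain ⟨m, rfl⟩ := hf; obtain ⟨m', rfl⟩ := hg
  exact ⟨m + m', (Finsupp.prod_add_index' (fun a => pow_zero _)
    (fun a b c => pow_add _ _ _)).symm⟩

lemma isCycProd_prod {ι : Type*} (s : Finset ι) (g : ι → Polynomial ℤ)
    (h : ∀ i ∈ s, IsCycProd (g i)) : IsCycProd (∏ i ∈ s, g i) :=
  Finset.prod_induction g IsCycProd (fun _ _ => isCycProd_mul) isCycProd_one h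

lemma isCycProd_pow {f : Polynomial ℤ} (hf : IsCycProd f) (k : ℕ) : IsCycProd (f ^ k) := by
  induction k with
  | zero => simpa using isCycProd_one
  | succ k ih => rw [pow_succ]; exact isCycProd_mul ih hf

lemma isCycProd_X_pow_sub_one {k : ℕ} (hk : 0 < k) : IsCycProd (X ^ k - 1 : Polynomial ℤ) := by
  rw [← prod_cyclotomic_eq_X_pow_sub_one hk]
  exact isCycProd_prod _ _ fun i _ => isCycProd_cyclotomic i

lemma isCycProd_poch_sq (n : ℕ) : IsCycProd (poch n * poch n) := by
  have h : poch n * poch n = ∏ i ∈ Finset.range n, (X ^ (i + 1) - 1 : Polynomial ℤ) ^ 2 := by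
    unfold poch
    rw [← Finset.prod_mul_distrib]
    exact Finset.prod_congr rfl fun i _ => by ring
  rw [h]
  exact isCycProd_prod _ _ fun i _ => isCycProd_pow (isCycProd_X_pow_sub_one i.succ_pos) 2

lemma poch_factorization (n : ℕ) :
    poch n = (-1 : Polynomial ℤ) ^ n * ∏ d ∈ Finset.Icc 1 n, cyclotomic d ℤ ^ (n / d) := by
  unfold poch
  have h1 : ∀ i ∈ Finset.range n,
      (1 - X ^ (i + 1) : Polynomial ℤ) = -1 * ∏ d ∈ (i + 1).divisors, cyclotomic d ℤ := by
    intro i _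
    rw [prod_cyclotomic_eq_X_pow_sub_one i.succ_pos, neg_one_mul, neg_sub]
  rw [Finset.prod_congr rfl h1, Finset.prod_mul_distrib, Finset.prod_const]
  congr 1
  · simp
  rw [Finset.prod_comm' (t' := Finset.Icc 1 n)
    (s' := fun d => {i ∈ Finset.range n | d ∣ i + 1}) ?_]
  · exact Finset.prod_congr rfl fun d _ => by rw [Finset.prod_const, Nat.card_multiples]
  · intro i d
    simp only [Finset.mem_range, Nat.mem_divisors, Finset.mem_filter, Finset.mem_Icc]
    constructor
    · rintro ⟨hi, hd, -⟩
      exact ⟨⟨hi, hd⟩, Nat.pos_of_dvd_of_pos hd i.succ_pos,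
        le_trans (Nat.le_of_dvd i.succ_pos hd) hi⟩
    · rintro ⟨⟨hi, hd⟩, -⟩
      exact ⟨hi, hd, i.succ_ne_zero⟩

lemma cycProd_dvd_poch {f : Polynomial ℤ} (hf : IsCycProd f) : ∃ n : ℕ, f ∣ poch n := by
  obtain ⟨m, rfl⟩ := hf
  set n := ∑ i ∈ m.support, i * m i with hn
  refine ⟨n, ?_⟩
  have key : ∀ i ∈ m.support, i * m i ≤ n := fun i hi =>
    Finset.single_le_sum (f := fun i => i * m i) (fun j _ => Nat.zero_le _) hi
  have h2 : (Finsupp.prod m fun i e => cyclotomic i ℤ ^ e)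
      = ∏ i ∈ m.support.erase 0, cyclotomic i ℤ ^ m i := by
    rw [Finsupp.prod]
    refine (Finset.prod_subset (Finset.erase_subset _ _) fun x hx hx' => ?_).symm
    have hx0 : x = 0 := by
      by_contra h0
      exact hx' (Finset.mem_erase.mpr ⟨h0, hx⟩)
    subst hx0; simp
  have hub : ∀ i ∈ m.support.erase 0, i ≤ n := by
    intro i hi
    obtain ⟨hi0, him⟩ := Finset.mem_erase.mp hi
    calc i ≤ i * m i := Nat.le_mul_of_pos_right i (Nat.pos_of_ne_zero (Finsupp.mem_support_iff.mp him))
    _ ≤ n := key i him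
  rw [h2, poch_factorization]
  refine Dvd.dvd.mul_left ?_ _
  refine dvd_trans (Finset.prod_dvd_prod_of_dvd _ _ ?_)
    (Finset.prod_dvd_prod_of_subset _ _ (fun i => cyclotomic i ℤ ^ (n / i)) ?_)
  · intro i hi
    obtain ⟨hi0, him⟩ := Finset.mem_erase.mp hi
    refine pow_dvd_pow _ ?_
    rw [Nat.le_div_iff_mul_le (Nat.pos_of_ne_zero hi0), mul_comm]
    exact key i him
  · intro i hi
    obtain ⟨hi0, _⟩ := Finset.mem_erase.mp hi
    exact Finset.mem_Icc.mpr ⟨Nat.one_le_iff_ne_zero.mpr hi0, hub i hi⟩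


lemma poch_dvd_poch {m n : ℕ} (h : m ≤ n) : poch m ∣ poch n :=
  Finset.prod_dvd_prod_of_subset _ _ _ (Finset.range_subset_range.mpr h)

lemma span_le_of_dvd_poch {f : Polynomial ℤ} {n : ℕ} (h : f ∣ poch n) :
    pochIdeal n ≤ Ideal.span {f} :=
  Ideal.span_singleton_le_span_singleton.mpr h

lemma le_span_of_poch_dvd {f : Polynomial ℤ} {n : ℕ} (h : poch n ∣ f) :
    Ideal.span {f} ≤ pochIdeal n :=
  Ideal.span_singleton_le_span_singleton.mpr h

lemma factor_factor {R : Type*} [CommRing R] {I J K : Ideal R} (h1 : I ≤ J) (h2 : J ≤ K)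
    (x : R ⧸ I) :
    Ideal.Quotient.factor (S := J) (T := K) h2 (Ideal.Quotient.factor (S := I) (T := J) h1 x) =
      Ideal.Quotient.factor (S := I) (T := K) (h1.trans h2) x := by
  obtain ⟨p, rfl⟩ := Ideal.Quotient.mk_surjective x
  simp [Ideal.Quotient.factor_mk]

noncomputable def nOf (f : {f : Polynomial ℤ // IsCycProd f}) : ℕ :=
  (cycProd_dvd_poch f.2).choose

lemma nOf_spec (f : {f : Polynomial ℤ // IsCycProd f}) : f.1 ∣ poch (nOf f) :=
  (cycProd_dvd_poch f.2).choose_spec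

noncomputable def fOf (n : ℕ) : {f : Polynomial ℤ // IsCycProd f} :=
  ⟨poch n * poch n, isCycProd_poch_sq n⟩

lemma poch_dvd_fOf (n : ℕ) : poch n ∣ (fOf n).1 := dvd_mul_right _ _

lemma habiro_coh (x : HabiroLimit) {f : Polynomial ℤ} {n n' : ℕ}
    (h : f ∣ poch n) (h' : f ∣ poch n') :
    Ideal.Quotient.factor (span_le_of_dvd_poch h) (x.1 n) =
      Ideal.Quotient.factor (span_le_of_dvd_poch h') (x.1 n') := by
  rw [← x.2 n (max n n') (le_max_left _ _), ← x.2 n' (max n n') (le_max_right _ _),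
    factor_factor, factor_factor]

lemma cyc_coh (y : CycLimit) {n : ℕ} (f g : {f : Polynomial ℤ // IsCycProd f})
    (h : poch n ∣ f.1) (h' : poch n ∣ g.1) :
    Ideal.Quotient.factor (le_span_of_poch_dvd h) (y.1 f) =
      Ideal.Quotient.factor (le_span_of_poch_dvd h') (y.1 g) := by
  have hf : f.1 ∣ (f.1 * g.1) := dvd_mul_right _ _
  have hg : g.1 ∣ (f.1 * g.1) := dvd_mul_left _ _
  rw [← y.2 f ⟨f.1 * g.1, isCycProd_mul f.2 g.2⟩ hf,
    ← y.2 g ⟨f.1 * g.1, isCycProd_mul f.2 g.2⟩ hg, factor_factor, factor_factor]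

noncomputable def phiFun (x : HabiroLimit) (f : {f : Polynomial ℤ // IsCycProd f}) :
    Polynomial ℤ ⧸ Ideal.span {f.1} :=
  Ideal.Quotient.factor (span_le_of_dvd_poch (nOf_spec f)) (x.1 (nOf f))

noncomputable def psiFun (y : CycLimit) (n : ℕ) : Polynomial ℤ ⧸ pochIdeal n :=
  Ideal.Quotient.factor (le_span_of_poch_dvd (poch_dvd_fOf n)) (y.1 (fOf n))

lemma phiFun_mem (x : HabiroLimit) : (fun f => phiFun x f) ∈ CycLimit := by
  intro f g h
  unfold phiFun
  rw [factor_factor]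
  exact habiro_coh x (h.trans (nOf_spec g)) (nOf_spec f)

lemma psiFun_mem (y : CycLimit) : (fun n => psiFun y n) ∈ HabiroLimit := by
  intro m n h
  unfold psiFun
  rw [factor_factor]
  exact cyc_coh y (fOf n) (fOf m) ((poch_dvd_poch h).trans (poch_dvd_fOf n)) (poch_dvd_fOf m)

noncomputable def habiroCycEquiv : HabiroLimit ≃+* CycLimit where
  toFun x := ⟨fun f => phiFun x f, phiFun_mem x⟩
  invFun y := ⟨fun n => psiFun y n, psiFun_mem y⟩
  left_inv x := by
    refine Subtype.ext (funext fun n => ?_)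
    show psiFun ⟨fun f => phiFun x f, phiFun_mem x⟩ n = x.1 n
    unfold psiFun phiFun
    rw [factor_factor]
    exact (habiro_coh x ((poch_dvd_fOf n).trans (nOf_spec (fOf n))) (dvd_refl (poch n))).trans
      (x.2 n n le_rfl)
  right_inv y := by
    refine Subtype.ext (funext fun f => ?_)
    show phiFun ⟨fun n => psiFun y n, psiFun_mem y⟩ f = y.1 f
    unfold phiFun psiFun
    rw [factor_factor]
    exact y.2 f (fOf (nOf f)) ((nOf_spec f).trans (poch_dvd_fOf (nOf f)))
  map_mul' x y := by
    refine Subtype.ext (funext fun f => ?_)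
    show phiFun (x * y) f = phiFun x f * phiFun y f
    unfold phiFun
    have : (x * y).1 (nOf f) = x.1 (nOf f) * y.1 (nOf f) := rfl
    rw [this, map_mul]
  map_add' x y := by
    refine Subtype.ext (funext fun f => ?_)
    show phiFun (x + y) f = phiFun x f + phiFun y f
    unfold phiFun
    have : (x + y).1 (nOf f) = x.1 (nOf f) + y.1 (nOf f) := rfl
    rw [this, map_add]

/-- The ideals `((q;q)_n)` are cofinal with the principal ideals generated by finite
products of cyclotomic polynomials; consequently the Habiro ring is isomorphic to
the cyclotomic completion `ℤ[q]^ℕ`. -/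
theorem habiro_ring_eq_cyclotomic_completion :
    (∀ n : ℕ, ∃ f : Polynomial ℤ, IsCycProd f ∧ poch n ∣ f) ∧
    (∀ f : Polynomial ℤ, IsCycProd f → ∃ n : ℕ, f ∣ poch n) ∧
    Nonempty (HabiroLimit ≃+* CycLimit) :=
  ⟨fun n => ⟨poch n * poch n, isCycProd_poch_sq n, dvd_mul_right _ _⟩,
   fun _ hf => cycProd_dvd_poch hf, ⟨habiroCycEquiv⟩⟩
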